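/- Let 𝒜 and ℬ be multi-matrix algebras, let F : ℬ → 𝒜 be a bijective UCP map whose inverse F⁻¹ : 𝒜 → ℬ is also UCP, let ω be a state on 𝒜, and set ξ := ω∘F. Then F⁻¹ is a Bayesian inverse of (F, ω): ξ(F⁻¹(A)·B) = ω(A·F(B)) for all A ∈ 𝒜 and B ∈ ℬ. -/

import Mathlib

open Matrix ComplexOrder

/-- The `k`-th amplification `id_{M_k(ℂ)} ⊗ Φ` of a map `Φ` between matrix algebras. -/
def amplify {n m : Type*} (Φ : Matrix n n ℂ → Matrix m m ℂ) (k : ℕ)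
    (M : Matrix (Fin k × n) (Fin k × n) ℂ) : Matrix (Fin k × m) (Fin k × m) ℂ :=
  Matrix.of fun p q => Φ (Matrix.of fun a b => M (p.1, a) (q.1, b)) p.2 q.2

/-- Complete positivity: all amplifications preserve positive semidefiniteness. -/
def IsCP {n m : Type*} [Fintype n] [Fintype m] (Φ : Matrix n n ℂ → Matrix m m ℂ) : Prop :=
  ∀ (k : ℕ) (M : Matrix (Fin k × n) (Fin k × n) ℂ), M.PosSemidef → (amplify Φ k M).PosSemidef

/-- A linear map between multi-matrix algebras is UCP if it is unital and each of its
block components is completely positive. -/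
def IsUCP {X Y : Type*} [Fintype X] [Fintype Y] [DecidableEq Y] {m : X → ℕ} {n : Y → ℕ}
    (F : ((y : Y) → Matrix (Fin (n y)) (Fin (n y)) ℂ) →ₗ[ℂ]
         ((x : X) → Matrix (Fin (m x)) (Fin (m x)) ℂ)) : Prop :=
  F 1 = 1 ∧ ∀ (x : X) (y : Y), IsCP (fun B => F (Pi.single y B) x)

/-- A state on a multi-matrix algebra: a unital positive linear functional. -/
def IsState {X : Type*} [Fintype X] {m : X → ℕ}
    (ω : ((x : X) → Matrix (Fin (m x)) (Fin (m x)) ℂ) →ₗ[ℂ] ℂ) : Prop :=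
  ω 1 = 1 ∧ ∀ A : (x : X) → Matrix (Fin (m x)) (Fin (m x)) ℂ, 0 ≤ ω (star A * A)

namespace Stmt12Aux

lemma psd_decomp {ι : Type*} [Fintype ι] {M : Matrix ι ι ℂ} (hM : M.PosSemidef) :
    ∃ B : Matrix ι ι ℂ, M = Bᴴ * B := by
  classical
  open scoped MatrixOrder in
  exact CStarAlgebra.nonneg_iff_eq_star_mul_self.mp hM.nonneg

/-- A zero diagonal entry of a PSD matrix kills its whole row. -/
lemma psd_row_zero {ι : Type*} [Fintype ι] {M : Matrix ι ι ℂ} (hM : M.PosSemidef)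
    {i : ι} (h : M i i = 0) (j : ι) : M i j = 0 := by
  obtain ⟨B, rfl⟩ := psd_decomp hM
  have hsum : ∑ k, star (B k i) * B k i = 0 := by
    simpa [Matrix.mul_apply, Matrix.conjTranspose_apply] using h
  have hcol : ∀ k, B k i = 0 := by
    intro k
    have h0 := (Finset.sum_eq_zero_iff_of_nonneg
      (fun k _ => star_mul_self_nonneg (B k i))).mp hsum k (Finset.mem_univ k)
    rcases mul_eq_zero.mp h0 with h1 | h1
    · exact star_eq_zero.mp h1
    · exact h1
  simp [Matrix.mul_apply, Matrix.conjTranspose_apply, hcol]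

lemma psd_both_zero {ι : Type*} [Fintype ι] [DecidableEq ι] {M : Matrix ι ι ℂ}
    (h1 : M.PosSemidef) (h2 : (-M).PosSemidef) : M = 0 := by
  have hd : ∀ i, M i i = 0 := by
    intro i
    have a1 := (Matrix.posSemidef_iff_dotProduct_mulVec.mp h1).2 (Pi.single i 1)
    have a2 := (Matrix.posSemidef_iff_dotProduct_mulVec.mp h2).2 (Pi.single i 1)
    simp only [Matrix.mulVec_single, dotProduct, Pi.star_apply, Pi.single_apply, apply_ite,
      star_one, star_zero, mul_one, ite_mul, one_mul, zero_mul, Finset.sum_ite_eq',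
      Finset.mem_univ, if_true, Matrix.neg_apply, MulOpposite.op_one, one_smul, Matrix.col_apply] at a1 a2
    exact le_antisymm (neg_nonneg.mp a2) a1
  ext i j
  simpa using psd_row_zero h1 (hd i) j

variable {X Y : Type*} [Fintype X] [Fintype Y] [DecidableEq Y]
  {m : X → ℕ} {n : Y → ℕ}
  (F : ((y : Y) → Matrix (Fin (n y)) (Fin (n y)) ℂ) →ₗ[ℂ]
       ((x : X) → Matrix (Fin (m x)) (Fin (m x)) ℂ))

/-- The whole UCP map between multi-matrix algebras is completely positive. -/
lemma fullCP (hF : IsUCP F) (k : ℕ)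
    (M : (y : Y) → Matrix (Fin k × Fin (n y)) (Fin k × Fin (n y)) ℂ)
    (hM : ∀ y, (M y).PosSemidef) (x : X) :
    (Matrix.of fun p q : Fin k × Fin (m x) =>
      F (fun y => Matrix.of fun a b => M y (p.1, a) (q.1, b)) x p.2 q.2).PosSemidef := by
  have key : (Matrix.of fun p q : Fin k × Fin (m x) =>
      F (fun y => Matrix.of fun a b => M y (p.1, a) (q.1, b)) x p.2 q.2)
      = ∑ y : Y, amplify (fun B => F (Pi.single y B) x) k (M y) := by
    ext p q
    have h1 : (fun y => Matrix.of fun a b => M y (p.1, a) (q.1, b))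
        = ∑ y : Y, Pi.single y (Matrix.of fun a b => M y (p.1, a) (q.1, b)) := by
      rw [Finset.univ_sum_single]
    rw [Matrix.sum_apply]
    simp only [amplify, Matrix.of_apply]
    rw [h1, map_sum]
    simp [Finset.sum_apply, Matrix.sum_apply]
  rw [key]
  exact Finset.sum_induction _ _ (fun A B hA hB => hA.add hB) Matrix.PosSemidef.zero
    (fun y _ => hF.2 x y k (M y) (hM y))

/-- The triple `(1, a, b)`. -/
def wtrip (a b : (y : Y) → Matrix (Fin (n y)) (Fin (n y)) ℂ) (c : Fin 3) :
    (y : Y) → Matrix (Fin (n y)) (Fin (n y)) ℂ :=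
  fun y => ![1, a y, b y] c

lemma wtrip_zero (a b : (y : Y) → Matrix (Fin (n y)) (Fin (n y)) ℂ) : wtrip a b 0 = 1 := by
  funext y; simp [wtrip]

lemma wtrip_one (a b : (y : Y) → Matrix (Fin (n y)) (Fin (n y)) ℂ) : wtrip a b 1 = a := by
  funext y; simp [wtrip]

lemma wtrip_two (a b : (y : Y) → Matrix (Fin (n y)) (Fin (n y)) ℂ) : wtrip a b 2 = b := by
  funext y; simp [wtrip]

/-- The big `3×3`-block matrix `[F(w_c* w_d)]_{c,d}` is PSD. -/
lemma bigN_psd (hF : IsUCP F) (a b : (y : Y) → Matrix (Fin (n y)) (Fin (n y)) ℂ) (x : X) :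
    (Matrix.of fun p q : Fin 3 × Fin (m x) =>
      F (star (wtrip a b p.1) * wtrip a b q.1) x p.2 q.2).PosSemidef := by
  set V : (y : Y) → Matrix (Fin 3 × Fin (n y)) (Fin 3 × Fin (n y)) ℂ :=
    fun y => Matrix.of fun p q => if p.1 = 0 then wtrip a b q.1 y p.2 q.2 else 0 with hV
  have hinner : ∀ c d : Fin 3,
      (fun y => Matrix.of fun i j => ((V y)ᴴ * V y) (c, i) (d, j))
        = star (wtrip a b c) * wtrip a b d := by
    intro c d
    funext y
    ext i j
    simp [hV, Matrix.mul_apply, Matrix.conjTranspose_apply, Fintype.sum_prod_type,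
      Fin.sum_univ_three, Pi.mul_apply, Pi.star_apply, Matrix.star_eq_conjTranspose]
  have h := fullCP F hF 3 (fun y => (V y)ᴴ * V y)
    (fun y => Matrix.posSemidef_conjTranspose_mul_self (V y)) x
  have heq : (Matrix.of fun p q : Fin 3 × Fin (m x) =>
      F (fun y => Matrix.of fun i j => ((V y)ᴴ * V y) ((p.1, i)) ((q.1, j))) x p.2 q.2)
      = (Matrix.of fun p q : Fin 3 × Fin (m x) =>
      F (star (wtrip a b p.1) * wtrip a b q.1) x p.2 q.2) := by
    ext p q
    rw [Matrix.of_apply, Matrix.of_apply, hinner p.1 q.1]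
  rw [← heq]
  exact h

/-- UCP maps are star-preserving. -/
lemma star_pres (hF : IsUCP F) (a : (y : Y) → Matrix (Fin (n y)) (Fin (n y)) ℂ) :
    F (star a) = star (F a) := by
  funext x
  ext i j
  have hN := (bigN_psd F hF a a x).1
  have := congrFun (congrFun hN ((1 : Fin 3), i)) ((0 : Fin 3), j)
  simp only [Matrix.conjTranspose_apply, Matrix.of_apply, wtrip_zero, wtrip_one] at this
  simp only [star_one, one_mul, mul_one] at this
  simpa [Pi.star_apply, Matrix.star_eq_conjTranspose, Matrix.conjTranspose_apply] using this.symm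

/-- `F((w_c)* w_d)` blocks are PSD after subtracting `F(w_c)* F(w_d)`. -/
lemma Dblocks_psd (hF : IsUCP F) (a b : (y : Y) → Matrix (Fin (n y)) (Fin (n y)) ℂ) (x : X) :
    (Matrix.fromBlocks
      (F (star a * a) x - (F a x)ᴴ * (F a x)) (F (star a * b) x - (F a x)ᴴ * (F b x))
      (F (star b * a) x - (F b x)ᴴ * (F a x)) (F (star b * b) x - (F b x)ᴴ * (F b x))).PosSemidef := by
  classical
  set I := Fin (m x)
  have hN := bigN_psd F hF a b x
  set N : Matrix (Fin 3 × I) (Fin 3 × I) ℂ :=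
    Matrix.of fun p q => F (star (wtrip a b p.1) * wtrip a b q.1) x p.2 q.2 with hNdef
  set f : I ⊕ (I ⊕ I) → Fin 3 × I :=
    Sum.elim (fun i => (0, i)) (Sum.elim (fun i => (1, i)) (fun i => (2, i))) with hf
  set A := F a x
  set B' := F b x
  set R : Matrix I (I ⊕ I) ℂ := Matrix.fromCols A B' with hR
  set S : Matrix (I ⊕ I) (I ⊕ I) ℂ :=
    Matrix.fromBlocks (F (star a * a) x) (F (star a * b) x)
      (F (star b * a) x) (F (star b * b) x) with hS
  have hG00 : F (star (wtrip a b 0) * wtrip a b 0) x = (1 : Matrix I I ℂ) := by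
    rw [wtrip_zero, star_one, one_mul, hF.1]; rfl
  have hG01 : F (star (wtrip a b 0) * wtrip a b 1) x = A := by
    rw [wtrip_zero, wtrip_one, star_one, one_mul]
  have hG02 : F (star (wtrip a b 0) * wtrip a b 2) x = B' := by
    rw [wtrip_zero, wtrip_two, star_one, one_mul]
  have hG10 : F (star (wtrip a b 1) * wtrip a b 0) x = Aᴴ := by
    rw [wtrip_zero, wtrip_one, mul_one, star_pres F hF a]
    simp [Pi.star_apply, Matrix.star_eq_conjTranspose]; rfl
  have hG20 : F (star (wtrip a b 2) * wtrip a b 0) x = B'ᴴ := by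
    rw [wtrip_zero, wtrip_two, mul_one, star_pres F hF b]
    simp [Pi.star_apply, Matrix.star_eq_conjTranspose]; rfl
  have hN' : N.submatrix f f = Matrix.fromBlocks 1 R Rᴴ S := by
    ext p q
    rcases p with i | (i | i) <;> rcases q with j | (j | j) <;>
      simp only [Matrix.submatrix_apply, hf, Sum.elim_inl, Sum.elim_inr, hNdef, Matrix.of_apply,
        Matrix.fromBlocks_apply₁₁, Matrix.fromBlocks_apply₁₂, Matrix.fromBlocks_apply₂₁,
        Matrix.fromBlocks_apply₂₂, hR, hS, Matrix.fromCols_apply_inl,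
        Matrix.fromCols_apply_inr, Matrix.conjTranspose_apply]
    · rw [hG00]
    · rw [hG01]
    · rw [hG02]
    · rw [hG10]; simp [Matrix.conjTranspose_apply]
    · rfl
    · rfl
    · rw [hG20]; simp [Matrix.conjTranspose_apply]
    · rfl
    · rfl
  have hNsub : (Matrix.fromBlocks 1 R Rᴴ S).PosSemidef := by
    rw [← hN']; exact hN.submatrix f
  set W : Matrix (I ⊕ (I ⊕ I)) (I ⊕ I) ℂ := Matrix.fromRows (-R) 1 with hW
  have hD := hNsub.conjTranspose_mul_mul_same W
  have hWct : Wᴴ = Matrix.fromCols (-R)ᴴ 1 := by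
    rw [hW, Matrix.conjTranspose_fromRows_eq_fromCols_conjTranspose, Matrix.conjTranspose_one]
  have hcalc : Wᴴ * Matrix.fromBlocks 1 R Rᴴ S * W = S - Rᴴ * R := by
    rw [hWct, hW, Matrix.mul_assoc, Matrix.fromBlocks_mul_fromRows,
      Matrix.fromCols_mul_fromRows]
    simp [Matrix.conjTranspose_neg, Matrix.mul_neg, Matrix.neg_mul, sub_eq_add_neg]
    abel
  rw [hcalc] at hD
  have hRR : Rᴴ * R = Matrix.fromBlocks (Aᴴ * A) (Aᴴ * B') (B'ᴴ * A) (B'ᴴ * B') := by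
    rw [hR, Matrix.conjTranspose_fromCols_eq_fromRows_conjTranspose,
      Matrix.fromRows_mul_fromCols]
  rw [hRR] at hD
  have hsplit : S - Matrix.fromBlocks (Aᴴ * A) (Aᴴ * B') (B'ᴴ * A) (B'ᴴ * B')
      = Matrix.fromBlocks
      (F (star a * a) x - Aᴴ * A) (F (star a * b) x - Aᴴ * B')
      (F (star b * a) x - B'ᴴ * A) (F (star b * b) x - B'ᴴ * B') := by
    rw [hS]
    ext p q
    rcases p with i | i <;> rcases q with j | j <;> simp [Matrix.fromBlocks]
  rw [hsplit] at hD
  exact hD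


/-- Kadison–Schwarz inequality for UCP maps. -/
lemma schwarz (hF : IsUCP F) (a : (y : Y) → Matrix (Fin (n y)) (Fin (n y)) ℂ) (x : X) :
    (F (star a * a) x - (F a x)ᴴ * (F a x)).PosSemidef := by
  have hD := (Dblocks_psd F hF a a x).submatrix Sum.inl
  have heq : (Matrix.fromBlocks
      (F (star a * a) x - (F a x)ᴴ * (F a x)) (F (star a * a) x - (F a x)ᴴ * (F a x))
      (F (star a * a) x - (F a x)ᴴ * (F a x)) (F (star a * a) x - (F a x)ᴴ * (F a x))).submatrix
        Sum.inl Sum.inl = F (star a * a) x - (F a x)ᴴ * (F a x) := by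
    ext i j
    simp [Matrix.fromBlocks]
  rwa [heq] at hD

lemma F_image_psd (hF : IsUCP F) (c : (y : Y) → Matrix (Fin (n y)) (Fin (n y)) ℂ) (x : X) :
    (F (star c * c) x).PosSemidef := by
  have h := (bigN_psd F hF c c x).submatrix (fun i : Fin (m x) => ((1 : Fin 3), i))
  have heq : (Matrix.of fun p q : Fin 3 × Fin (m x) =>
      F (star (wtrip c c p.1) * wtrip c c q.1) x p.2 q.2).submatrix
        (fun i : Fin (m x) => ((1 : Fin 3), i)) (fun i : Fin (m x) => ((1 : Fin 3), i))
      = F (star c * c) x := by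
    ext i j
    simp [wtrip_one]
  rwa [heq] at h

/-- UCP maps are positive. -/
lemma F_pos (hF : IsUCP F) (p : (y : Y) → Matrix (Fin (n y)) (Fin (n y)) ℂ)
    (hp : ∀ y, (p y).PosSemidef) (x : X) : (F p x).PosSemidef := by
  choose c hc using fun y => psd_decomp (hp y)
  have hpc : p = star c * c := by
    funext y
    simp [Pi.mul_apply, Pi.star_apply, Matrix.star_eq_conjTranspose, ← hc y]
  rw [hpc]
  exact F_image_psd F hF c x

/-- Equality in the Schwarz inequality, given a UCP inverse. -/
lemma gap_zero [DecidableEq X] (hF : IsUCP F)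
    (Finv : ((x : X) → Matrix (Fin (m x)) (Fin (m x)) ℂ) →ₗ[ℂ]
            ((y : Y) → Matrix (Fin (n y)) (Fin (n y)) ℂ)) (hFinv : IsUCP Finv)
    (hleft : Finv ∘ₗ F = LinearMap.id) (hright : F ∘ₗ Finv = LinearMap.id)
    (a : (y : Y) → Matrix (Fin (n y)) (Fin (n y)) ℂ) (x : X) :
    F (star a * a) x = (F a x)ᴴ * (F a x) := by
  have h1 := schwarz F hF a x
  have hinv : Finv (F a) = a := by
    have := LinearMap.congr_fun hleft a
    simpa using this
  have h2 : ∀ y, ((Finv (star (F a) * F a) - star a * a) y).PosSemidef := by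
    intro y
    have h := schwarz Finv hFinv (F a) y
    rw [hinv] at h
    have : (Finv (star (F a) * F a) - star a * a) y
        = Finv (star (F a) * F a) y - (a y)ᴴ * a y := by
      simp [Pi.sub_apply, Pi.mul_apply, Pi.star_apply, Matrix.star_eq_conjTranspose]
    rw [this]
    exact h
  have h3 := F_pos F hF _ h2 x
  have h4 : F (Finv (star (F a) * F a) - star a * a)
      = star (F a) * F a - F (star a * a) := by
    rw [map_sub]
    have : F (Finv (star (F a) * F a)) = star (F a) * F a := by
      have := LinearMap.congr_fun hright (star (F a) * F a)
      simpa using this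
    rw [this]
  rw [h4] at h3
  have h5 : (-(F (star a * a) x - (F a x)ᴴ * (F a x))).PosSemidef := by
    have : (star (F a) * F a - F (star a * a)) x
        = -(F (star a * a) x - (F a x)ᴴ * (F a x)) := by
      simp [Pi.sub_apply, Pi.mul_apply, Pi.star_apply, Matrix.star_eq_conjTranspose, neg_sub]
    rw [← this]
    exact h3
  have h6 := psd_both_zero h1 h5
  exact sub_eq_zero.mp h6

/-- Off-diagonal consequence: full multiplicativity relation. -/
lemma offdiag [DecidableEq X] (hF : IsUCP F)
    (Finv : ((x : X) → Matrix (Fin (m x)) (Fin (m x)) ℂ) →ₗ[ℂ]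
            ((y : Y) → Matrix (Fin (n y)) (Fin (n y)) ℂ)) (hFinv : IsUCP Finv)
    (hleft : Finv ∘ₗ F = LinearMap.id) (hright : F ∘ₗ Finv = LinearMap.id)
    (a b : (y : Y) → Matrix (Fin (n y)) (Fin (n y)) ℂ) (x : X) :
    F (star a * b) x = (F a x)ᴴ * (F b x) := by
  have hD := Dblocks_psd F hF a b x
  have hz : F (star a * a) x - (F a x)ᴴ * (F a x) = 0 := by
    rw [gap_zero F hF Finv hFinv hleft hright a x, sub_self]
  ext i j
  have hdiag : (Matrix.fromBlocks
      (F (star a * a) x - (F a x)ᴴ * (F a x)) (F (star a * b) x - (F a x)ᴴ * (F b x))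
      (F (star b * a) x - (F b x)ᴴ * (F a x)) (F (star b * b) x - (F b x)ᴴ * (F b x)))
      (Sum.inl i) (Sum.inl i) = 0 := by
    simp [Matrix.fromBlocks, hz]
  have := psd_row_zero hD hdiag (Sum.inr j)
  simp only [Matrix.fromBlocks_apply₁₂] at this
  have h0 : F (star a * b) x i j - ((F a x)ᴴ * (F b x)) i j = 0 := by
    simpa [Matrix.sub_apply] using this
  exact sub_eq_zero.mp h0

end Stmt12Aux

theorem stmt_12 {X Y : Type*} [Fintype X] [Fintype Y] [DecidableEq X] [DecidableEq Y]
    (m : X → ℕ) (n : Y → ℕ)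
    (ω : ((x : X) → Matrix (Fin (m x)) (Fin (m x)) ℂ) →ₗ[ℂ] ℂ) (hω : IsState ω)
    (F : ((y : Y) → Matrix (Fin (n y)) (Fin (n y)) ℂ) →ₗ[ℂ]
         ((x : X) → Matrix (Fin (m x)) (Fin (m x)) ℂ)) (hF : IsUCP F)
    (Finv : ((x : X) → Matrix (Fin (m x)) (Fin (m x)) ℂ) →ₗ[ℂ]
            ((y : Y) → Matrix (Fin (n y)) (Fin (n y)) ℂ)) (hFinv : IsUCP Finv)
    (hleft : Finv ∘ₗ F = LinearMap.id) (hright : F ∘ₗ Finv = LinearMap.id) :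
    ∀ (A : (x : X) → Matrix (Fin (m x)) (Fin (m x)) ℂ)
      (B : (y : Y) → Matrix (Fin (n y)) (Fin (n y)) ℂ),
      ω (F (Finv A * B)) = ω (A * F B) := by
  intro A B
  have hFA : F (Finv A) = A := by simpa using LinearMap.congr_fun hright A
  have hmul : F (Finv A * B) = F (Finv A) * F B := by
    funext x
    ext i j
    have h := Stmt12Aux.offdiag F hF Finv hFinv hleft hright (star (Finv A)) B x
    rw [star_star] at h
    rw [Stmt12Aux.star_pres F hF (Finv A)] at h
    have h2 : (star (F (Finv A)) x)ᴴ = F (Finv A) x := by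
      simp [Pi.star_apply, Matrix.star_eq_conjTranspose]
    rw [h2] at h
    rw [h]
    simp [Pi.mul_apply]
  rw [hmul, hFA]
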